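/- Assume Condition C. Then for any ΛH_X-module Y such that Y ≅ X as Λ-modules, there exists a unique i ∈ {1,…,r} with Y ≅ ρ_i ⊗_k X as ΛH_X-modules. Hence there are exactly r pairwise non-isomorphic ΛH_X-module structures induced on X. -/

import Mathlib

/-! Common framework: twisted modules, skew group algebras (characterized by their
universal basis property), restriction of scalars, coset sums, indecomposability. -/

noncomputable section

section Framework

variable {k Λ G A : Type} [Field k] [Ring Λ] [Algebra k Λ] [Group G]

/-- The twisted module `{}^{g}X` : the same underlying abelian group as `X`, with the
`Λ`-action `a · x = (φ g)⁻¹ (a) • x`. -/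
def Twisted (_φ : G →* (Λ ≃ₐ[k] Λ)) (_g : G) (X : Type) : Type := X

instance Twisted.instAddCommGroup (φ : G →* (Λ ≃ₐ[k] Λ)) (g : G) (X : Type) [AddCommGroup X] :
    AddCommGroup (Twisted φ g X) := inferInstanceAs (AddCommGroup X)

instance Twisted.instModule (φ : G →* (Λ ≃ₐ[k] Λ)) (g : G) (X : Type) [AddCommGroup X]
    [Module Λ X] : Module Λ (Twisted φ g X) :=
  Module.compHom X ((φ g⁻¹).toAlgHom.toRingHom)

/-- A module over another ring `A`, viewed as a `Λ`-module through a map `ι : Λ →ₐ[k] A`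
(restriction of scalars). -/
def Res {A : Type} [Ring A] [Algebra k A] (_ι : Λ →ₐ[k] A) (M : Type) : Type := M

instance Res.instAddCommGroup {A : Type} [Ring A] [Algebra k A] (ι : Λ →ₐ[k] A) (M : Type)
    [AddCommGroup M] : AddCommGroup (Res ι M) := inferInstanceAs (AddCommGroup M)

instance Res.instModule {A : Type} [Ring A] [Algebra k A] (ι : Λ →ₐ[k] A) (M : Type)
    [AddCommGroup M] [Module A M] : Module Λ (Res ι M) :=
  Module.compHom M ι.toRingHom

/-- `A`, together with an embedding `ι : Λ → A` and units `u g` (`g ∈ G`), is a realization of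
the skew group algebra `ΛG`:  multiplication satisfies `g a · h b = g h · h⁻¹(a) b`
(equivalently the commutation rule below), and `A` is free as a left `Λ`-module with
basis `{u g ∣ g ∈ G}`. -/
structure IsSkewGroupAlgebra (φ : G →* (Λ ≃ₐ[k] Λ)) (A : Type) [Ring A] [Algebra k A]
    (ι : Λ →ₐ[k] A) (u : G →* Aˣ) : Prop where
  skew_comm : ∀ (g : G) (a : Λ), (u g : A) * ι a = ι (φ g a) * (u g : A)
  free : ∀ x : A, ∃! c : G →₀ Λ, x = c.sum fun g a => (u g : A) * ι a

/-- `X` is a `g`-invariant module: `{}^{g}X ≅ X`. -/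
def IsGInvariantAt (φ : G →* (Λ ≃ₐ[k] Λ)) (g : G) (X : Type) [AddCommGroup X] [Module Λ X] :
    Prop := Nonempty (Twisted φ g X ≃ₗ[Λ] X)

/-- `X` is a `G`-invariant module: `{}^{g}X ≅ X` for all `g ∈ G`. -/
def IsGInvariant (φ : G →* (Λ ≃ₐ[k] Λ)) (X : Type) [AddCommGroup X] [Module Λ X] : Prop :=
  ∀ g : G, IsGInvariantAt φ g X

/-- The set `H_X = {g ∈ G ∣ {}^{g}X ≅ X}` (a subgroup of `G`). -/
def Hset (φ : G →* (Λ ≃ₐ[k] Λ)) (X : Type) [AddCommGroup X] [Module Λ X] : Set G :=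
  {g : G | IsGInvariantAt φ g X}

/-- `T` is a complete set of left coset representatives for `H` in `G`. -/
def IsLeftTransversal {G : Type} [Group G] (H T : Set G) : Prop :=
  ∀ g : G, ∃! t : G, t ∈ T ∧ t⁻¹ * g ∈ H

/-- The direct sum `⊕_{t ∈ T} {}^{t}X`. -/
def CosetSum (φ : G →* (Λ ≃ₐ[k] Λ)) (T : Set G) (X : Type) : Type :=
  ∀ t : T, Twisted φ (t : G) X

instance CosetSum.instAddCommGroup (φ : G →* (Λ ≃ₐ[k] Λ)) (T : Set G) (X : Type)
    [AddCommGroup X] : AddCommGroup (CosetSum φ T X) :=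
  inferInstanceAs (AddCommGroup (∀ t : T, Twisted φ (t : G) X))

instance CosetSum.instModule (φ : G →* (Λ ≃ₐ[k] Λ)) (T : Set G) (X : Type)
    [AddCommGroup X] [Module Λ X] : Module Λ (CosetSum φ T X) :=
  inferInstanceAs (Module Λ (∀ t : T, Twisted φ (t : G) X))

/-- The direct sum `⊕_{g ∈ G} {}^{g}X`. -/
def GSum (φ : G →* (Λ ≃ₐ[k] Λ)) (X : Type) : Type := ∀ g : G, Twisted φ g X

instance GSum.instAddCommGroup (φ : G →* (Λ ≃ₐ[k] Λ)) (X : Type) [AddCommGroup X] :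
    AddCommGroup (GSum φ X) := inferInstanceAs (AddCommGroup (∀ g : G, Twisted φ g X))

instance GSum.instModule (φ : G →* (Λ ≃ₐ[k] Λ)) (X : Type) [AddCommGroup X] [Module Λ X] :
    Module Λ (GSum φ X) := inferInstanceAs (Module Λ (∀ g : G, Twisted φ g X))

end Framework

/-- A module is indecomposable: it is nonzero and is not the direct sum of two nonzero
submodules. -/
def IsIndec (R X : Type) [Ring R] [AddCommGroup X] [Module R X] : Prop :=
  Nontrivial X ∧ ∀ p q : Submodule R X, IsCompl p q → p = ⊥ ∨ q = ⊥

/-- `X` is an indecomposable `G`-invariant module: it is nonzero, `G`-invariant, and does not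
decompose as a direct sum of two nonzero `G`-invariant modules. -/
def IsIndecGInvariant {k Λ G : Type} [Field k] [Ring Λ] [Algebra k Λ] [Group G]
    (φ : G →* (Λ ≃ₐ[k] Λ)) (X : Type) [AddCommGroup X] [Module Λ X] : Prop :=
  Nontrivial X ∧ IsGInvariant φ X ∧
    ∀ p q : Submodule Λ X, IsCompl p q →
      IsGInvariant φ p → IsGInvariant φ q → p = ⊥ ∨ q = ⊥

/-- `(M, θ)` is the module obtained from `X` by induction (extension of scalars) along the
ring homomorphism `j : R → S` : i.e. `θ : X → M` is `j`-semilinear and universal among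
`j`-semilinear maps from `X` to `S`-modules.  For `j : Λ → ΛG` this characterizes
`ΛG ⊗_Λ X` together with the canonical map `x ↦ 1 ⊗ x`. -/
structure IsInducedAlong {R S : Type} [Ring R] [Ring S] (j : R →+* S)
    (X : Type) [AddCommGroup X] [Module R X]
    (M : Type) [AddCommGroup M] [Module S M] (θ : X →+ M) : Prop where
  semilinear : ∀ (r : R) (x : X), θ (r • x) = j r • θ x
  universal : ∀ (N : Type) [AddCommGroup N] [Module S N] (f : X →+ N),
      (∀ (r : R) (x : X), f (r • x) = j r • f x) →
      ∃! F : M →ₗ[S] N, ∀ x : X, F (θ x) = f x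

/-- An isomorphism of modules, with the two module structures given explicitly (used when the
same underlying type carries two different module structures). -/
def ModIso (R : Type) [Semiring R] (M N : Type) [AddCommMonoid M] [AddCommMonoid N]
    (mM : Module R M) (mN : Module R N) : Prop :=
  Nonempty (@LinearEquiv R R _ _ (RingHom.id R) (RingHom.id R) RingHomInvPair.ids
    RingHomInvPair.ids M N _ _ mM mN)

/-- The scalar action of an explicitly given module structure. -/
def msmul {R M : Type} [Semiring R] [AddCommMonoid M] (m : Module R M) (r : R) (x : M) : M :=
  letI := m; r • x

/-- `X'` realizes the `ΛH`-module `ρ ⊗_k X` for the one-dimensional representation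
(character) `χ` of `H`: there is an additive isomorphism `e : X' → X` (`l₀ ⊗ x ↦ x`)
commuting with the `Λ`-action, and transforming the action of `h ∈ H` by the scalar `χ h`. -/
def IsCharTwist {k Λ H B : Type} [Field k] [Ring Λ] [Algebra k Λ] [Group H]
    [Ring B] [Algebra k B] (ιB : Λ →ₐ[k] B) (uB : H →* Bˣ) (χ : H →* kˣ)
    (X X' : Type) [AddCommGroup X] [Module B X] [AddCommGroup X'] [Module B X'] : Prop :=
  ∃ e : X' ≃+ X, (∀ (a : Λ) (x : X'), e (ιB a • x) = ιB a • e x) ∧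
    ∀ (h : H) (x : X'), e (uB h • x) = algebraMap k B (χ h : k) • (uB h • e x)

end

/-! ### Auxiliary lemmas -/

section MyAux

variable {k Λ : Type} [Field k] [Ring Λ] [Algebra k Λ]
variable {X : Type} [AddCommGroup X] [Module Λ X] [Module k X] [IsScalarTower k Λ X]

/-- Every `Λ`-endomorphism of a finite-dimensional indecomposable module over an
algebraically closed field is a scalar plus a nilpotent (via Fitting's lemma). -/
theorem my_quasiScalar [IsAlgClosed k] [FiniteDimensional k X] [Nontrivial X]
    (hind : ∀ p q : Submodule Λ X, IsCompl p q → p = ⊥ ∨ q = ⊥)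
    (T : Module.End Λ X) : ∃ μ : k, IsNilpotent (T - μ • 1) := by
  obtain ⟨μ, hμ⟩ := Module.End.exists_eigenvalue
    ((LinearMap.restrictScalars k T : X →ₗ[k] X) : Module.End k X)
  obtain ⟨v, hv⟩ := hμ.exists_hasEigenvector
  refine ⟨μ, ?_⟩
  set S : Module.End Λ X := T - μ • 1 with hS
  set Sk : Module.End k X := (LinearMap.restrictScalars k T : X →ₗ[k] X) - μ • 1 with hSk
  have hpt : ∀ x : X, Sk x = S x := fun x => rfl
  have hppt : ∀ (m : ℕ) (x : X), (Sk ^ m) x = (S ^ m) x := by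
    intro m
    induction m with
    | zero => intro x; rfl
    | succ n ih =>
      intro x
      rw [pow_succ, pow_succ, Module.End.mul_apply, Module.End.mul_apply, hpt, ih]
  set N := Module.finrank k X with hN
  have hNpos : 0 < N := Module.finrank_pos
  have hker2 : LinearMap.ker (Sk ^ (2 * N)) = LinearMap.ker (Sk ^ N) := by
    rw [hN, Module.End.ker_pow_eq_ker_pow_finrank_of_le (by omega)]
  have hker : ∀ x : X, (S ^ (2 * N)) x = 0 → (S ^ N) x = 0 := by
    intro x hx
    have hmem : x ∈ LinearMap.ker (Sk ^ (2 * N)) := by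
      rw [LinearMap.mem_ker, hppt]; exact hx
    rw [hker2, LinearMap.mem_ker, hppt] at hmem; exact hmem
  set p := LinearMap.ker (S ^ N) with hp
  set q := LinearMap.range (S ^ N) with hq
  have hdisj : ∀ x : X, x ∈ p → x ∈ q → x = 0 := by
    intro x hxp hxq
    obtain ⟨y, hy⟩ := hxq
    have h2 : (S ^ (2 * N)) y = 0 := by
      have : (S ^ N) ((S ^ N) y) = 0 := by rw [hy]; exact hxp
      rw [two_mul, pow_add, Module.End.mul_apply]; exact this
    rw [← hy]; exact hker y h2
  have hrangele : LinearMap.range (Sk ^ (2 * N)) ≤ LinearMap.range (Sk ^ N) := by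
    rw [two_mul, pow_add]
    exact LinearMap.range_comp_le_range _ _
  have hrank1 := LinearMap.finrank_range_add_finrank_ker (Sk ^ N)
  have hrank2 := LinearMap.finrank_range_add_finrank_ker (Sk ^ (2 * N))
  rw [hker2] at hrank2
  have hrange2 : LinearMap.range (Sk ^ (2 * N)) = LinearMap.range (Sk ^ N) := by
    apply Submodule.eq_of_le_of_finrank_le hrangele
    omega
  have hcompl : IsCompl p q := by
    constructor
    · rw [disjoint_iff_inf_le]
      intro x hx
      exact hdisj x hx.1 hx.2
    · rw [codisjoint_iff, eq_top_iff]
      intro x _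
      have hx : (Sk ^ N) x ∈ LinearMap.range (Sk ^ (2 * N)) := by
        rw [hrange2]; exact LinearMap.mem_range_self _ x
      obtain ⟨y, hy⟩ := hx
      refine Submodule.mem_sup.mpr ⟨x - (S ^ N) y, ?_, (S ^ N) y, ⟨y, rfl⟩, by abel⟩
      rw [hp, LinearMap.mem_ker, map_sub]
      have hy' : (S ^ (2 * N)) y = (S ^ N) x := by rw [← hppt, hy, hppt]
      rw [← hy', two_mul, pow_add, Module.End.mul_apply]
      abel
  rcases hind p q hcompl with hbot | hbot
  · exfalso
    have hvS : S v = 0 := by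
      have hv1 : (LinearMap.restrictScalars k T : X →ₗ[k] X) v = μ • v :=
        Module.End.mem_eigenspace_iff.mp hv.1
      have : Sk v = 0 := by
        rw [hSk, LinearMap.sub_apply, hv1, LinearMap.smul_apply, Module.End.one_apply, sub_self]
      rw [← hpt]; exact this
    have hvN : (S ^ N) v = 0 := by
      obtain ⟨m, hm⟩ := Nat.exists_eq_add_of_lt hNpos
      rw [hm, zero_add, pow_succ, Module.End.mul_apply, hvS, map_zero]
    have : v ∈ p := hvN
    rw [hbot] at this
    exact hv.2 this
  · refine ⟨N, ?_⟩
    rwa [← LinearMap.range_eq_bot]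

/-- The scalar in the scalar-plus-nilpotent decomposition is unique. -/
theorem my_unique [Nontrivial X] {T : Module.End Λ X} {μ ν : k}
    (h1 : IsNilpotent (T - μ • 1)) (h2 : IsNilpotent (T - ν • 1)) : μ = ν := by
  have c1 : Commute T (T - ν • (1 : Module.End Λ X)) :=
    (Commute.refl T).sub_right ((Commute.one_right T).smul_right ν)
  have c2 : Commute (μ • (1 : Module.End Λ X)) (T - ν • 1) :=
    (Commute.one_left (T - ν • (1 : Module.End Λ X))).smul_left μ
  have hc : Commute (T - μ • (1 : Module.End Λ X)) (T - ν • 1) := c1.sub_left c2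
  have hnil : IsNilpotent ((ν - μ) • (1 : Module.End Λ X)) := by
    have heq : (T - μ • (1 : Module.End Λ X)) - (T - ν • 1) = (ν - μ) • 1 := by
      rw [sub_smul]; abel
    rw [← heq]
    exact hc.isNilpotent_sub h1 h2
  by_contra hne
  have hne' : ν - μ ≠ 0 := sub_ne_zero.mpr (fun h => hne h.symm)
  obtain ⟨n, hn⟩ := hnil
  obtain ⟨x, hx⟩ := exists_ne (0 : X)
  have := congrArg (fun (f : Module.End Λ X) => f x) hn
  simp only [smul_pow, one_pow, LinearMap.smul_apply, Module.End.one_apply,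
    LinearMap.zero_apply] at this
  rcases smul_eq_zero.mp this with h | h
  · exact pow_ne_zero n hne' h
  · exact hx h

end MyAux

/-- Any character of a finite group into `kˣ` belongs to any injectively-indexed family of
`Nat.card H` characters (by Dedekind's linear independence of characters). -/
theorem my_char_complete {H k : Type} [Group H] [Finite H] [Field k] {r : ℕ}
    (hr : r = Nat.card H) {χ : Fin r → (H →* kˣ)} (hχ : Function.Injective χ)
    (ψ : H →* kˣ) : ∃ i : Fin r, χ i = ψ := by
  by_contra hcon
  push_neg at hcon
  classical
  letI : Fintype H := Fintype.ofFinite H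
  let tok : (H →* kˣ) → (H →* k) := fun f => (Units.coeHom k).comp f
  have htok : Function.Injective tok := by
    intro a b hab
    ext h
    have := congrArg (fun f : H →* k => f h) hab
    exact this
  let Gfam : Option (Fin r) → (H →* k) := fun o => Option.elim o (tok ψ) (fun i => tok (χ i))
  have hGinj : Function.Injective Gfam := by
    intro a b hab
    match a, b with
    | none, none => rfl
    | some i, some j => exact congrArg some (hχ (htok hab))
    | none, some j => exact absurd (htok hab).symm (hcon j)
    | some i, none => exact absurd (htok hab) (hcon i)
  have hli : LinearIndependent k (fun o => (Gfam o : H → k)) :=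
    (linearIndependent_monoidHom H k).comp Gfam hGinj
  have hcard := hli.fintype_card_le_finrank
  rw [Module.finrank_fintype_fun_eq_card] at hcard
  simp only [Fintype.card_option, Fintype.card_fin] at hcard
  have : Fintype.card H = r := by rw [hr, Nat.card_eq_fintype_card]
  omega

/-- **Lemma 2.5(4).** Assume Condition C.  Every `ΛH_X`-module `Y` with `Y ≅ X` as
`Λ`-modules is isomorphic, as a `ΛH_X`-module, to `ρ_i ⊗_k X` for a unique `i`.
Hence there are exactly `r` pairwise non-isomorphic `ΛH_X`-module structures on `X`. -/
theorem HX_module_structures_on_X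
    (k Λ G : Type) [Field k] [IsAlgClosed k] [Ring Λ] [Algebra k Λ]
    [Group G] [Fintype G] (hchar : (Fintype.card G : k) ≠ 0)
    (φ : G →* (Λ ≃ₐ[k] Λ))
    -- Condition C : X is a finite dimensional indecomposable Λ-module with H_X abelian
    (X : Type) [AddCommGroup X] [Module Λ X] [Module k X] [IsScalarTower k Λ X]
    [FiniteDimensional k X] (hX : IsIndec Λ X)
    (H : Subgroup G) (hH : (H : Set G) = Hset φ X)
    (hab : ∀ a b : H, a * b = b * a)
    -- the skew group algebra ΛH_X
    (B : Type) [Ring B] [Algebra k B] (ιB : Λ →ₐ[k] B) (uB : H →* Bˣ)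
    (hB : IsSkewGroupAlgebra (φ.comp H.subtype) B ιB uB)
    -- the ΛH_X-module structure on X (extending its Λ-module structure)
    [Module B X] (hBX : ∀ (a : Λ) (x : X), ιB a • x = a • x)
    -- the r = |H_X| pairwise distinct characters of H_X
    (r : ℕ) (hr : r = Nat.card H)
    (χ : Fin r → (H →* kˣ)) (hχ : Function.Injective χ)
    -- the ΛH_X-modules ρ_i ⊗_k X
    (Xρ : Fin r → Type) [∀ i, AddCommGroup (Xρ i)] [∀ i, Module B (Xρ i)]
    (hXρ : ∀ i, IsCharTwist ιB uB (χ i) X (Xρ i))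
    (Y : Type) [AddCommGroup Y] [Module B Y]
    (hY : Nonempty (Res ιB Y ≃ₗ[Λ] X)) :
    ∃! i : Fin r, Nonempty (Y ≃ₗ[B] Xρ i) := by
  classical
  obtain ⟨hnt, hind⟩ := hX
  haveI : Nontrivial X := hnt
  letI : Fintype H := Fintype.ofFinite H
  obtain ⟨f⟩ := hY
  -- package the Λ-isomorphism as an additive equivalence
  set F : Y ≃+ X := f.toAddEquiv with hFdef
  have hF : ∀ (a : Λ) (y : Y), F (ιB a • y) = a • F y := fun a y => f.map_smul a y
  have hFs : ∀ (a : Λ) (x : X), F.symm (a • x) = ιB a • F.symm x := by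
    intro a x
    apply F.injective
    rw [hF, AddEquiv.apply_symm_apply, AddEquiv.apply_symm_apply]
  -- basic facts about the skew group algebra actions
  have hPinv : ∀ (h : H) (a : Λ), (φ.comp H.subtype) h⁻¹ ((φ.comp H.subtype) h a) = a := by
    intro h a
    rw [← AlgEquiv.mul_apply, ← map_mul, inv_mul_cancel, map_one, AlgEquiv.one_apply]
  have hcommM : ∀ {M : Type} [AddCommGroup M] [Module B M] (h : H) (a : Λ) (m : M),
      (uB h : B) • ιB a • m = ιB ((φ.comp H.subtype) h a) • (uB h : B) • m := by
    intro M _ _ h a m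
    rw [← mul_smul, hB.skew_comm, mul_smul]
  have huuM : ∀ {M : Type} [AddCommGroup M] [Module B M] (h₁ h₂ : H) (m : M),
      (uB h₁ : B) • (uB h₂ : B) • m = (uB (h₁ * h₂) : B) • m := by
    intro M _ _ h₁ h₂ m
    rw [← mul_smul, ← Units.val_mul, ← map_mul]
  have huc : ∀ {M : Type} [AddCommGroup M] [Module B M] (h : H) (m : M),
      (uB h⁻¹ : B) • (uB h : B) • m = m := by
    intro M _ _ h m
    rw [huuM, inv_mul_cancel, map_one, Units.val_one, one_smul]
  have huc' : ∀ {M : Type} [AddCommGroup M] [Module B M] (h : H) (m : M),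
      (uB h : B) • (uB h⁻¹ : B) • m = m := by
    intro M _ _ h m
    rw [huuM, mul_inv_cancel, map_one, Units.val_one, one_smul]
  have hsm1 : ∀ (μ : k) (x : X), μ • x = ιB (algebraMap k Λ μ) • x := by
    intro μ x
    rw [hBX, algebraMap_smul]
  have hsmB : ∀ (μ : k) (x : X), algebraMap k B μ • x = μ • x := by
    intro μ x
    rw [hsm1, AlgHom.commutes]
  have hkB : ∀ (h : H) (μ : k) (x : X), (uB h : B) • μ • x = μ • (uB h : B) • x := by
    intro h μ x
    rw [hsm1, hcommM, AlgEquiv.commutes, ← hsm1]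
  -- the "scalar part" function on Λ-endomorphisms of X
  have quasi : ∀ T : Module.End Λ X, ∃ μ : k, IsNilpotent (T - μ • 1) :=
    fun T => my_quasiScalar hind T
  choose lam hlam using quasi
  have lam_spec : ∀ {T : Module.End Λ X} {μ : k}, IsNilpotent (T - μ • 1) → lam T = μ :=
    fun {T μ} h => my_unique (hlam T) h
  have lam_one : lam (1 : Module.End Λ X) = 1 := lam_spec (by simp)
  have nil_lam : ∀ {T : Module.End Λ X}, IsNilpotent T → lam T = 0 :=
    fun {T} h => lam_spec (by simpa using h)
  have lam_nil : ∀ {T : Module.End Λ X}, lam T = 0 → IsNilpotent T := by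
    intro T h
    have := hlam T
    rwa [h, zero_smul, sub_zero] at this
  have lam_zero : lam (0 : Module.End Λ X) = 0 := nil_lam ⟨1, by simp⟩
  have inj_not_nil : ∀ {A : Module.End Λ X}, Function.Injective A → ¬ IsNilpotent A := by
    intro A hinj hnil
    obtain ⟨n, hn⟩ := hnil
    obtain ⟨x, hx⟩ := exists_ne (0 : X)
    apply hx
    have h1 : (A ^ n) x = (A ^ n) 0 := by rw [hn]; simp
    rw [Module.End.pow_apply, Module.End.pow_apply] at h1
    exact hinj.iterate n h1
  have surj_not_nil : ∀ {A : Module.End Λ X}, Function.Surjective A → ¬ IsNilpotent A := by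
    intro A hsurj hnil
    obtain ⟨n, hn⟩ := hnil
    obtain ⟨x, hx⟩ := exists_ne (0 : X)
    obtain ⟨y, hy⟩ := (hsurj.iterate n) x
    apply hx
    rw [← hy, ← Module.End.pow_apply, hn, LinearMap.zero_apply]
  have lam_unit : ∀ {T : Module.End Λ X}, lam T ≠ 0 → IsUnit T := by
    intro T h
    have hdec : T = (T - lam T • 1) + lam T • (1 : Module.End Λ X) := by abel
    have hu : IsUnit (lam T • (1 : Module.End Λ X)) :=
      ⟨⟨lam T • 1, (lam T)⁻¹ • 1,
        by rw [smul_mul_assoc, one_mul, smul_smul, mul_inv_cancel₀ h, one_smul],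
        by rw [smul_mul_assoc, one_mul, smul_smul, inv_mul_cancel₀ h, one_smul]⟩, rfl⟩
    have hcomm : Commute (T - lam T • (1 : Module.End Λ X)) (lam T • 1) :=
      ((Commute.one_right T).smul_right (lam T)).sub_left (Commute.refl _)
    rw [hdec]
    exact (hlam T).isUnit_add_right_of_commute hu hcomm
  have unit_lam : ∀ {T : Module.End Λ X}, IsUnit T → lam T ≠ 0 := by
    intro T hu h0
    exact inj_not_nil ((Module.End.isUnit_iff T).mp hu).injective (lam_nil h0)
  have lam_mul_zero_right : ∀ (A B' : Module.End Λ X), lam B' = 0 → lam (A * B') = 0 := by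
    intro A B' hB'
    by_contra h
    have hinj : Function.Injective B' := by
      have hinj2 := ((Module.End.isUnit_iff _).mp (lam_unit h)).injective
      intro x y hxy
      exact hinj2 (by rw [Module.End.mul_apply, Module.End.mul_apply, hxy])
    exact inj_not_nil hinj (lam_nil hB')
  have lam_mul_zero_left : ∀ (A B' : Module.End Λ X), lam A = 0 → lam (A * B') = 0 := by
    intro A B' hA
    by_contra h
    have hsurj : Function.Surjective A := by
      have hsurj2 := ((Module.End.isUnit_iff _).mp (lam_unit h)).surjective
      intro x
      obtain ⟨y, hy⟩ := hsurj2 x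
      exact ⟨B' y, by rw [← Module.End.mul_apply]; exact hy⟩
    exact surj_not_nil hsurj (lam_nil hA)
  have lam_add_zero : ∀ {A B' : Module.End Λ X}, lam A = 0 → lam B' = 0 → lam (A + B') = 0 := by
    intro A B' hA hB'
    by_contra h
    obtain ⟨u, hu⟩ := lam_unit h
    have h1 : (↑u⁻¹ : Module.End Λ X) * A + ↑u⁻¹ * B' = 1 := by
      rw [← mul_add, ← hu, Units.inv_mul]
    have h2 : lam ((↑u⁻¹ : Module.End Λ X) * A) = 0 := lam_mul_zero_right _ _ hA
    have h3 : IsNilpotent ((↑u⁻¹ : Module.End Λ X) * B') :=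
      lam_nil (lam_mul_zero_right _ _ hB')
    have h4 : (↑u⁻¹ : Module.End Λ X) * A = 1 - ↑u⁻¹ * B' := by rw [← h1]; abel
    have h5 : lam ((↑u⁻¹ : Module.End Λ X) * A) = 1 := by
      apply lam_spec
      have heq : (1 - (↑u⁻¹ : Module.End Λ X) * B') - (1 : k) • (1 : Module.End Λ X)
          = -(↑u⁻¹ * B') := by rw [one_smul]; abel
      rw [h4, heq]
      exact h3.neg
    rw [h2] at h5
    exact one_ne_zero h5.symm
  have lam_nil_sub : ∀ (A : Module.End Λ X), lam (A - lam A • 1) = 0 :=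
    fun A => nil_lam (hlam A)
  have lam_add : ∀ (A B' : Module.End Λ X), lam (A + B') = lam A + lam B' := by
    intro A B'
    apply lam_spec
    have heq : A + B' - (lam A + lam B') • (1 : Module.End Λ X)
        = (A - lam A • 1) + (B' - lam B' • 1) := by rw [add_smul]; abel
    rw [heq]
    exact lam_nil (lam_add_zero (lam_nil_sub A) (lam_nil_sub B'))
  have lam_mul : ∀ (A B' : Module.End Λ X), lam (A * B') = lam A * lam B' := by
    intro A B'
    apply lam_spec
    have hdec : A * B' - (lam A * lam B') • (1 : Module.End Λ X)
        = (A - lam A • 1) * B' + (lam A • 1) * (B' - lam B' • 1) := by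
      rw [sub_mul, mul_sub, smul_mul_assoc, one_mul, smul_mul_assoc, one_mul, smul_smul]
      abel
    rw [hdec]
    exact lam_nil (lam_add_zero (lam_mul_zero_left _ _ (lam_nil_sub A))
      (lam_mul_zero_right _ _ (lam_nil_sub B')))
  have lam_smul : ∀ (c : k) (A : Module.End Λ X), lam (c • A) = c * lam A := by
    intro c A
    have h1 : c • A = (c • (1 : Module.End Λ X)) * A := by rw [smul_mul_assoc, one_mul]
    have h2 : lam (c • (1 : Module.End Λ X)) = c := lam_spec (by simp)
    rw [h1, lam_mul, h2]
  have lam_conj : ∀ (A A' : Module.End Λ X) (e : X ≃+ X),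
      (∀ (μ : k) (x : X), e (μ • x) = μ • e x) →
      (∀ x, A' x = e.symm (A (e x))) → lam A' = lam A := by
    intro A A' e he hA'
    apply lam_spec
    obtain ⟨n, hn⟩ := hlam A
    have hes : ∀ (μ : k) (x : X), e.symm (μ • x) = μ • e.symm x := by
      intro μ x
      apply e.injective
      rw [he, AddEquiv.apply_symm_apply, AddEquiv.apply_symm_apply]
    have key : ∀ (m : ℕ) (x : X),
        ((A' - lam A • 1) ^ m) x = e.symm (((A - lam A • 1) ^ m) (e x)) := by
      intro m
      induction m with
      | zero => intro x; simp
      | succ m ih =>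
        intro x
        have hstep : (A' - lam A • 1) x = e.symm ((A - lam A • 1) (e x)) := by
          rw [LinearMap.sub_apply, LinearMap.sub_apply, hA', LinearMap.smul_apply,
            LinearMap.smul_apply, Module.End.one_apply, Module.End.one_apply, map_sub, hes,
            AddEquiv.symm_apply_apply]
        rw [pow_succ, pow_succ, Module.End.mul_apply, Module.End.mul_apply, hstep, ih,
          AddEquiv.apply_symm_apply]
    refine ⟨n, ?_⟩
    ext x
    rw [LinearMap.zero_apply, key n x, hn, LinearMap.zero_apply, map_zero]
  -- the twisted endomorphisms T h comparing the two module structures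
  set Sfun : ↥H → X → X := fun h x => F ((uB h : B) • F.symm x) with hSdef
  have hSadd : ∀ (h : H) (x y : X), Sfun h (x + y) = Sfun h x + Sfun h y := by
    intro h x y
    simp only [hSdef]
    rw [map_add, smul_add, map_add]
  have hSsm : ∀ (h : H) (a : Λ) (x : X),
      Sfun h (a • x) = ((φ.comp H.subtype) h a) • Sfun h x := by
    intro h a x
    simp only [hSdef]
    rw [hFs, hcommM, hF]
  have hSS : ∀ (g h : H) (x : X), Sfun g (Sfun h x) = Sfun (g * h) x := by
    intro g h x
    simp only [hSdef]
    rw [AddEquiv.symm_apply_apply, huuM]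
  obtain ⟨T, hT⟩ : ∃ T : ↥H → Module.End Λ X,
      ∀ (h : H) (x : X), T h x = (uB h⁻¹ : B) • Sfun h x := by
    refine ⟨fun h => ⟨⟨fun x => (uB h⁻¹ : B) • Sfun h x, ?_⟩, ?_⟩, fun h x => rfl⟩
    · intro x y
      show (uB h⁻¹ : B) • Sfun h (x + y) = _
      rw [hSadd, smul_add]
    · intro a x
      show (uB h⁻¹ : B) • Sfun h (a • x) = (RingHom.id Λ) a • (uB h⁻¹ : B) • Sfun h x
      simp only [RingHom.id_apply]
      rw [hSsm, ← hBX ((φ.comp H.subtype) h a), hcommM, hPinv, hBX]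
  have hT1 : T 1 = 1 := by
    ext x
    rw [hT]
    simp only [hSdef]
    rw [inv_one, map_one, Units.val_one, one_smul, one_smul, AddEquiv.apply_symm_apply,
      Module.End.one_apply]
  have hST : ∀ (h : H) (x : X), Sfun h x = (uB h : B) • T h x := by
    intro h x
    rw [hT, huc']
  have hTinj : ∀ h : H, Function.Injective (T h) := by
    intro h x y hxy
    have h1 : Sfun h x = Sfun h y := by rw [hST, hST, hxy]
    have h2 : F ((uB h : B) • F.symm x) = F ((uB h : B) • F.symm y) := by
      simpa only [hSdef] using h1
    have h3 := F.injective h2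
    have h4 := congrArg (fun z : Y => (uB h⁻¹ : B) • z) h3
    simp only [huc] at h4
    exact F.symm.injective h4
  have lamT_ne : ∀ h : H, lam (T h) ≠ 0 := fun h h0 => inj_not_nil (hTinj h) (lam_nil h0)
  obtain ⟨eU, heU, heUs⟩ : ∃ eU : ↥H → (X ≃+ X), (∀ (h : H) (x : X), eU h x = (uB h : B) • x)
      ∧ (∀ (h : H) (x : X), (eU h).symm x = (uB h⁻¹ : B) • x) := by
    refine ⟨fun h => AddEquiv.mk ⟨fun x => (uB h : B) • x, fun x => (uB h⁻¹ : B) • x,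
      fun x => huc h x, fun x => huc' h x⟩ (fun x y => smul_add _ x y),
      fun h x => rfl, fun h x => rfl⟩
  obtain ⟨C, hC⟩ : ∃ C : ↥H → Module.End Λ X → Module.End Λ X,
      ∀ (h : H) (A : Module.End Λ X) (x : X), C h A x = (uB h⁻¹ : B) • A ((uB h : B) • x) := by
    refine ⟨fun h A => ⟨⟨fun x => (uB h⁻¹ : B) • A ((uB h : B) • x), ?_⟩, ?_⟩, fun h A x => rfl⟩
    · intro x y
      show (uB h⁻¹ : B) • A ((uB h : B) • (x + y)) = _
      rw [smul_add, map_add, smul_add]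
    · intro a x
      show (uB h⁻¹ : B) • A ((uB h : B) • a • x)
          = (RingHom.id Λ) a • (uB h⁻¹ : B) • A ((uB h : B) • x)
      simp only [RingHom.id_apply]
      rw [← hBX a x, hcommM, hBX, map_smul, ← hBX ((φ.comp H.subtype) h a), hcommM, hPinv, hBX]
  have lam_C : ∀ (h : H) (A : Module.End Λ X), lam (C h A) = lam A := by
    intro h A
    apply lam_conj A (C h A) (eU h)
    · intro μ x
      rw [heU, heU, hkB]
    · intro x
      rw [hC, heUs, heU]
  have hTmul : ∀ (g h : H), T (h * g) = C g (T h) * T g := by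
    intro g h
    ext x
    have h1 : T (h * g) x = (uB (h * g)⁻¹ : B) • Sfun (h * g) x := hT _ _
    have h2 : (C g (T h) * T g) x = (uB g⁻¹ : B) • (uB h⁻¹ : B) • Sfun (h * g) x := by
      rw [Module.End.mul_apply, hC, ← hST, hT, hSS]
    rw [h1, h2, mul_inv_rev, ← huuM]
  have lamT_mul : ∀ g h : H, lam (T (h * g)) = lam (T h) * lam (T g) := by
    intro g h
    rw [hTmul g h, lam_mul, lam_C]
  have lamT_one : lam (T 1) = 1 := by rw [hT1, lam_one]
  obtain ⟨χY, hχY⟩ : ∃ χY : ↥H →* kˣ, ∀ h : H, (χY h : k) = lam (T h) :=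
    ⟨{ toFun := fun h => Units.mk0 (lam (T h)) (lamT_ne h),
       map_one' := by ext; simp [lamT_one],
       map_mul' := by intro g h; ext; simp [lamT_mul h g] }, fun h => rfl⟩
  obtain ⟨i, hi⟩ := my_char_complete hr hχ χY
  -- the averaged intertwiner Φ
  set Φ : Module.End Λ X := ∑ h : H, ((↑(χY h)⁻¹ : k) • T h) with hΦdef
  have lam_sum : ∀ (s : Finset ↥H) (c : ↥H → Module.End Λ X),
      lam (∑ h ∈ s, c h) = ∑ h ∈ s, lam (c h) := by
    intro s c
    induction s using Finset.induction_on with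
    | empty => simpa using lam_zero
    | insert _ _ ha ih => rw [Finset.sum_insert ha, Finset.sum_insert ha, lam_add, ih]
  have hcardH : ((Fintype.card ↥H : k)) ≠ 0 := by
    intro h0
    apply hchar
    have h1 : Nat.card ↥H * H.index = Nat.card G := H.card_mul_index
    have h2 : (Fintype.card G : k) = ((Nat.card ↥H : ℕ) : k) * ((H.index : ℕ) : k) := by
      rw [← Nat.cast_mul, h1, Nat.card_eq_fintype_card]
    rw [h2, Nat.card_eq_fintype_card, h0, zero_mul]
  have lam_Φ : lam Φ = (Fintype.card ↥H : k) := by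
    rw [hΦdef, lam_sum]
    have hone : ∀ h : H, lam ((↑(χY h)⁻¹ : k) • T h) = 1 := by
      intro h
      rw [lam_smul, ← hχY h, Units.val_inv_eq_inv_val, inv_mul_cancel₀ (Units.ne_zero _)]
    rw [Finset.sum_congr rfl (fun h _ => hone h)]
    simp [Finset.card_univ]
  have Φunit : IsUnit Φ := lam_unit (by rw [lam_Φ]; exact hcardH)
  have Φbij : Function.Bijective Φ := (Module.End.isUnit_iff Φ).mp Φunit
  have hΦx : ∀ x : X, Φ x = ∑ h : H, (↑(χY h)⁻¹ : k) • T h x := by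
    intro x
    rw [hΦdef, LinearMap.sum_apply]
    exact Finset.sum_congr rfl fun h _ => LinearMap.smul_apply _ _ _
  have hTS : ∀ (g h : H) (x : X), T h (Sfun g x) = (uB g : B) • T (h * g) x := by
    intro g h x
    rw [hT, hSS, hST, huuM, inv_mul_cancel_left]
  have hΦS : ∀ (g : H) (x : X), Φ (Sfun g x) = ((χY g : k)) • (uB g : B) • Φ x := by
    intro g x
    have h1 : Φ (Sfun g x) = ∑ h : H, (↑(χY h)⁻¹ : k) • ((uB g : B) • T (h * g) x) := by
      rw [hΦx]
      exact Finset.sum_congr rfl fun h _ => by rw [hTS]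
    have hsc : ∀ h : H, (↑(χY h)⁻¹ : k) = (χY g : k) * (↑(χY (h * g))⁻¹ : k) := by
      intro h
      have : (χY h)⁻¹ = χY g * (χY (h * g))⁻¹ := by
        rw [map_mul, mul_inv_rev, mul_inv_cancel_left]
      exact_mod_cast congrArg Units.val this
    have h3 : ∑ h : H, (↑(χY h)⁻¹ : k) • T (h * g) x = (χY g : k) • Φ x := by
      rw [hΦx, Finset.smul_sum]
      apply Fintype.sum_equiv (Equiv.mulRight g)
      intro h
      simp only [Equiv.coe_mulRight]
      rw [hsc h, mul_smul]
    rw [h1, Finset.sum_congr rfl (fun h _ => (hkB g _ _).symm), ← Finset.smul_sum, h3, hkB]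
  -- B-linearity from the universal basis property
  have hBlin : ∀ {M N : Type} [AddCommGroup M] [Module B M] [AddCommGroup N] [Module B N]
      (g : M → N), (∀ m m', g (m + m') = g m + g m') →
      (∀ (a : Λ) (m : M), g (ιB a • m) = ιB a • g m) →
      (∀ (h : H) (m : M), g ((uB h : B) • m) = (uB h : B) • g m) →
      ∀ (b : B) (m : M), g (b • m) = b • g m := by
    intro M N _ _ _ _ g hadd hι hu b m
    obtain ⟨c, hc, -⟩ := hB.free b
    have hg0 : g 0 = 0 := by
      have h00 := hadd 0 0
      rw [add_zero] at h00
      exact (add_eq_left.mp h00.symm)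
    have key : ∀ s : Finset ↥H, g ((∑ h ∈ s, (uB h : B) * ιB (c h)) • m)
        = (∑ h ∈ s, (uB h : B) * ιB (c h)) • g m := by
      intro s
      induction s using Finset.induction_on with
      | empty => simpa using hg0
      | insert _ _ ha ih =>
        rw [Finset.sum_insert ha, add_smul, hadd, ih, add_smul, mul_smul, hu, hι, ← mul_smul]
    rw [hc]
    exact key c.support
  -- the isomorphism Y ≅ Xρ i
  obtain ⟨e, he1, he2⟩ := hXρ i
  rw [hi] at he2
  simp only [Units.smul_def] at he2
  have he1s : ∀ (a : Λ) (x : X), e.symm (ιB a • x) = ιB a • e.symm x := by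
    intro a x
    apply e.injective
    rw [he1, AddEquiv.apply_symm_apply, AddEquiv.apply_symm_apply]
  have hΨadd : ∀ y y' : Y, e.symm (Φ (F (y + y'))) = e.symm (Φ (F y)) + e.symm (Φ (F y')) := by
    intro y y'
    rw [map_add, map_add, map_add]
  have hΨι : ∀ (a : Λ) (y : Y), e.symm (Φ (F (ιB a • y))) = ιB a • e.symm (Φ (F y)) := by
    intro a y
    rw [hF, map_smul, ← hBX, he1s]
  have hΨu : ∀ (h : H) (y : Y),
      e.symm (Φ (F ((uB h : B) • y))) = (uB h : B) • e.symm (Φ (F y)) := by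
    intro h y
    have hFu : F ((uB h : B) • y) = Sfun h (F y) := by
      simp only [hSdef]
      rw [AddEquiv.symm_apply_apply]
    rw [hFu, hΦS]
    apply e.injective
    rw [AddEquiv.apply_symm_apply, he2, AddEquiv.apply_symm_apply, hsmB]
  have hbij : Function.Bijective (fun y : Y => e.symm (Φ (F y))) := by
    constructor
    · intro a b hab
      exact F.injective (Φbij.injective (e.symm.injective hab))
    · intro w
      obtain ⟨x, hx⟩ := Φbij.surjective (e w)
      refine ⟨F.symm x, ?_⟩
      show e.symm (Φ (F (F.symm x))) = w
      rw [AddEquiv.apply_symm_apply, hx, AddEquiv.symm_apply_apply]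
  refine ⟨i, ⟨LinearEquiv.ofBijective
    ⟨⟨fun y => e.symm (Φ (F y)), fun y y' => hΨadd y y'⟩,
      fun b y => by simpa using hBlin (fun y => e.symm (Φ (F y))) hΨadd hΨι hΨu b y⟩
    hbij⟩, ?_⟩
  -- uniqueness
  rintro j ⟨g⟩
  obtain ⟨ej, hej1, hej2⟩ := hXρ j
  simp only [Units.smul_def] at hej2
  obtain ⟨θ, hθ⟩ : ∃ θ : Module.End Λ X, ∀ x, θ x = ej (g (F.symm x)) := by
    refine ⟨⟨⟨fun x => ej (g (F.symm x)), ?_⟩, ?_⟩, fun x => rfl⟩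
    · intro x y
      show ej (g (F.symm (x + y))) = _
      rw [map_add, map_add, map_add]
    · intro a x
      show ej (g (F.symm (a • x))) = (RingHom.id Λ) a • ej (g (F.symm x))
      simp only [RingHom.id_apply]
      rw [hFs, map_smul, hej1, hBX]
  have hθinj : Function.Injective θ := by
    intro x y hxy
    rw [hθ, hθ] at hxy
    exact F.symm.injective (g.injective (ej.injective hxy))
  have hθlam : lam θ ≠ 0 := fun h0 => inj_not_nil hθinj (lam_nil h0)
  have hθS : ∀ (h : H) (x : X), θ (Sfun h x) = ((χ j h : k)) • (uB h : B) • θ x := by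
    intro h x
    rw [hθ]
    have h1 : F.symm (Sfun h x) = (uB h : B) • F.symm x := by
      simp only [hSdef]
      rw [AddEquiv.symm_apply_apply]
    rw [h1, map_smul, hej2, hsmB, ← hθ]
  have hkey : ∀ h : H, (χ j h : k) * lam θ = lam θ * (χY h : k) := by
    intro h
    have hE : C h θ * T h = ((χ j h : k)) • θ := by
      ext x
      rw [Module.End.mul_apply, hC, ← hST, hθS, hkB, huc, LinearMap.smul_apply]
    have hl := congrArg lam hE
    rw [lam_mul, lam_C, lam_smul] at hl
    rw [← hχY h] at hl
    exact hl.symm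
  have hcharereq : χ j = χY := by
    ext h
    have hh := hkey h
    rw [mul_comm (lam θ) _] at hh
    exact mul_right_cancel₀ hθlam hh
  apply hχ
  rw [hcharereq, hi]
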